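/- Let 0 < α < 1, 0 ≤ β ≤ 1, γ = α + β(1−α), ρ > 0. For φ with ρD_{a+}^{α,β} φ well-defined and regular enough, ρJ_{a+}^{γ}(ρD_{a+}^{γ} φ) = ρJ_{a+}^{α}(ρD_{a+}^{α,β} φ) on (a,b]. -/

import Mathlib

open Real MeasureTheory Set Filter Topology

/-- Generalized (Katugampola) fractional integral; identity for `α = 0`. -/
noncomputable def igral (ρ α a : ℝ) (φ : ℝ → ℝ) (x : ℝ) : ℝ :=
  if α = 0 then φ x
  else ρ ^ (1 - α) / Real.Gamma α * ∫ t in a..x, t ^ (ρ - 1) * φ t * (x ^ ρ - t ^ ρ) ^ (α - 1)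

/-- Generalized (Katugampola) fractional derivative of order `α ∈ (0,1)`. -/
noncomputable def genD (ρ α a : ℝ) (φ : ℝ → ℝ) (x : ℝ) : ℝ :=
  x ^ (1 - ρ) * deriv (igral ρ (1 - α) a φ) x

/-- Hilfer–Katugampola fractional derivative of order `α` and type `β`. -/
noncomputable def hkD (ρ α β a : ℝ) (φ : ℝ → ℝ) : ℝ → ℝ :=
  igral ρ (β * (1 - α)) a
    (fun s => s ^ (1 - ρ) * deriv (igral ρ ((1 - β) * (1 - α)) a φ) s)

/-- Membership in the weighted space `C_{γ,ρ}[a,b]`. -/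
def MemW (ρ γ a b : ℝ) (φ : ℝ → ℝ) : Prop :=
  ∃ h : ℝ → ℝ, ContinuousOn h (Icc a b) ∧
    ∀ x ∈ Ioc a b, h x = ((x ^ ρ - a ^ ρ) / ρ) ^ γ * φ x

/-- Weighted sup-norm on `C_{γ,ρ}[a,b]`. -/
noncomputable def wnorm (ρ γ a b : ℝ) (φ : ℝ → ℝ) : ℝ :=
  sSup ((fun x => |((x ^ ρ - a ^ ρ) / ρ) ^ γ * φ x|) '' Ioc a b)

lemma rbeta01 {p q : ℝ} (hp : 0 < p) (hq : 0 < q) :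
    ∫ t in (0:ℝ)..1, t ^ (p - 1) * (1 - t) ^ (q - 1) =
      Real.Gamma p * Real.Gamma q / Real.Gamma (p + q) := by
  have h := Complex.Gamma_mul_Gamma_eq_betaIntegral (s := (p:ℂ)) (t := (q:ℂ))
    (by simpa using hp) (by simpa using hq)
  have hβ : Complex.betaIntegral (p:ℂ) (q:ℂ) =
      ((∫ t in (0:ℝ)..1, t ^ (p - 1) * (1 - t) ^ (q - 1) : ℝ) : ℂ) := by
    rw [Complex.betaIntegral, ← intervalIntegral.integral_ofReal]
    refine intervalIntegral.integral_congr fun t ht => ?_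
    rw [Set.uIcc_of_le (by norm_num : (0:ℝ) ≤ 1)] at ht
    rw [show ((p:ℂ) - 1) = ((p - 1 : ℝ) : ℂ) by push_cast; ring,
      show ((q:ℂ) - 1) = ((q - 1 : ℝ) : ℂ) by push_cast; ring,
      show (1 - (t:ℂ)) = ((1 - t : ℝ) : ℂ) by push_cast; ring,
      ← Complex.ofReal_cpow ht.1, ← Complex.ofReal_cpow (by linarith [ht.2]),
      ← Complex.ofReal_mul]
  rw [hβ, Complex.Gamma_ofReal, Complex.Gamma_ofReal, ← Complex.ofReal_add,
    Complex.Gamma_ofReal, ← Complex.ofReal_mul, ← Complex.ofReal_mul] at h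
  have := Complex.ofReal_inj.mp h
  have hΓ : Real.Gamma (p + q) ≠ 0 := (Real.Gamma_pos_of_pos (by linarith)).ne'
  field_simp
  linarith [this]


lemma rbeta_eval {p q v w : ℝ} (hp : 0 < p) (hq : 0 < q) (hvw : v < w) :
    ∫ u in v..w, (u - v) ^ (p - 1) * (w - u) ^ (q - 1) =
      (w - v) ^ (p + q - 1) * (Real.Gamma p * Real.Gamma q / Real.Gamma (p + q)) := by
  have hwv : (0:ℝ) < w - v := sub_pos.2 hvw
  have h := intervalIntegral.integral_comp_mul_add
    (f := fun u => (u - v) ^ (p - 1) * (w - u) ^ (q - 1)) (a := 0) (b := 1)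
    (c := w - v) hwv.ne' v
  rw [mul_zero, zero_add, mul_one, sub_add_cancel] at h
  have h2 : (∫ t in (0:ℝ)..1, ((w - v) * t + v - v) ^ (p - 1) * (w - ((w - v) * t + v)) ^ (q - 1))
      = (w - v) ^ (p - 1) * (w - v) ^ (q - 1) *
        ∫ t in (0:ℝ)..1, t ^ (p - 1) * (1 - t) ^ (q - 1) := by
    rw [← intervalIntegral.integral_const_mul]
    refine intervalIntegral.integral_congr fun t ht => ?_
    rw [Set.uIcc_of_le (by norm_num : (0:ℝ) ≤ 1)] at ht
    rw [show (w - v) * t + v - v = (w - v) * t by ring,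
      show w - ((w - v) * t + v) = (w - v) * (1 - t) by ring,
      Real.mul_rpow hwv.le ht.1, Real.mul_rpow hwv.le (by linarith [ht.2])]
    ring
  rw [h2, rbeta01 hp hq, smul_eq_mul] at h
  have : (∫ u in v..w, (u - v) ^ (p - 1) * (w - u) ^ (q - 1))
      = (w - v) * ((w - v) ^ (p - 1) * (w - v) ^ (q - 1) *
          (Real.Gamma p * Real.Gamma q / Real.Gamma (p + q))) := by
    rw [h]; field_simp
  rw [this, ← Real.rpow_add hwv,
    show (p - 1) + (q - 1) = p + q - 2 by ring,
    show p + q - 1 = (p + q - 2) + 1 by ring, Real.rpow_add_one hwv.ne']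
  ring

lemma rbeta_eval_Ioo {p q v w : ℝ} (hp : 0 < p) (hq : 0 < q) (hvw : v < w) :
    ∫ u in Ioo v w, (u - v) ^ (p - 1) * (w - u) ^ (q - 1) =
      (w - v) ^ (p + q - 1) * (Real.Gamma p * Real.Gamma q / Real.Gamma (p + q)) := by
  rw [← MeasureTheory.integral_Ioc_eq_integral_Ioo, ← intervalIntegral.integral_of_le hvw.le]
  exact rbeta_eval hp hq hvw


lemma int_left {c v w : ℝ} (hc : -1 < c) (hvw : v ≤ w) :
    IntegrableOn (fun u => (u - v) ^ c) (Ioc v w) := by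
  have h := (intervalIntegral.intervalIntegrable_rpow' (a := 0) (b := w - v) hc).comp_sub_right v
  rw [zero_add, sub_add_cancel] at h
  exact (intervalIntegrable_iff_integrableOn_Ioc_of_le (by linarith)).mp h

lemma int_right {c v w : ℝ} (hc : -1 < c) (hvw : v ≤ w) :
    IntegrableOn (fun u => (w - u) ^ c) (Ioc v w) := by
  have h := (intervalIntegral.intervalIntegrable_rpow' (a := 0) (b := w - v) hc).comp_sub_left w
  rw [sub_zero, sub_sub_cancel] at h
  exact (intervalIntegrable_iff_integrableOn_Ioc_of_le (by linarith)).mp h.symm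

lemma beta_integrableOn {p q v w : ℝ} (hp : 0 < p) (hq : 0 < q) (hvw : v < w) :
    IntegrableOn (fun u => (u - v) ^ (p - 1) * (w - u) ^ (q - 1)) (Ioo v w) := by
  set m := (v + w) / 2 with hm
  have hvm : v < m := by rw [hm]; linarith
  have hmw : m < w := by rw [hm]; linarith
  have hmeas : Measurable fun u : ℝ => (u - v) ^ (p - 1) * (w - u) ^ (q - 1) :=
    ((measurable_id.sub_const v).pow_const _).mul
      ((measurable_const.sub measurable_id).pow_const _)
  have h1 : IntegrableOn (fun u => (u - v) ^ (p - 1) * (w - u) ^ (q - 1)) (Ioc v m) := by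
    set K : ℝ := max ((w - m) ^ (q - 1)) ((w - v) ^ (q - 1)) with hK
    refine Integrable.mono' ((int_left (c := p - 1) (by linarith) hvm.le).const_mul K)
      hmeas.aestronglyMeasurable.restrict ?_
    rw [ae_restrict_iff' measurableSet_Ioc]
    refine Eventually.of_forall fun u hu => ?_
    have h1 : 0 < u - v := by simp at hu; linarith [hu.1]
    have h2 : 0 < w - u := by simp at hu; linarith [hu.2]
    rw [Real.norm_eq_abs, abs_of_nonneg (by positivity)]
    have hb : (w - u) ^ (q - 1) ≤ K := by
      rcases le_or_gt q 1 with hq1 | hq1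
      · exact le_max_of_le_left
          (Real.rpow_le_rpow_of_nonpos (by linarith [hu.2]) (by simp at hu; linarith [hu.2]) (by linarith))
      · exact le_max_of_le_right
          (Real.rpow_le_rpow h2.le (by linarith) (by linarith))
    calc (u - v) ^ (p - 1) * (w - u) ^ (q - 1) ≤ (u - v) ^ (p - 1) * K :=
          mul_le_mul_of_nonneg_left hb (by positivity)
      _ = K * (u - v) ^ (p - 1) := by ring
  have h2 : IntegrableOn (fun u => (u - v) ^ (p - 1) * (w - u) ^ (q - 1)) (Ioc m w) := by
    set K : ℝ := max ((m - v) ^ (p - 1)) ((w - v) ^ (p - 1)) with hK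
    refine Integrable.mono' ((int_right (c := q - 1) (by linarith) hmw.le).const_mul K)
      hmeas.aestronglyMeasurable.restrict ?_
    rw [ae_restrict_iff' measurableSet_Ioc]
    refine Eventually.of_forall fun u hu => ?_
    simp only [mem_Ioc] at hu
    have h1 : 0 < u - v := by linarith [hu.1]
    have h2 : 0 ≤ w - u := by linarith [hu.2]
    rw [Real.norm_eq_abs, abs_of_nonneg (by positivity)]
    have hb : (u - v) ^ (p - 1) ≤ K := by
      rcases le_or_gt p 1 with hp1 | hp1
      · exact le_max_of_le_left
          (Real.rpow_le_rpow_of_nonpos (by linarith) (by linarith [hu.1]) (by linarith))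
      · exact le_max_of_le_right
          (Real.rpow_le_rpow h1.le (by linarith) (by linarith))
    calc (u - v) ^ (p - 1) * (w - u) ^ (q - 1) ≤ K * (w - u) ^ (q - 1) :=
          mul_le_mul_of_nonneg_right hb (by positivity)
      _ = K * (w - u) ^ (q - 1) := rfl
  exact (h1.union h2).mono_set (fun u hu => by
    simp only [mem_Ioo] at hu
    rcases le_or_gt u m with h | h
    · exact mem_union_left _ ⟨hu.1, h⟩
    · exact mem_union_right _ ⟨h, hu.2.le⟩)

lemma slope_bounds {ρ a b s t : ℝ} (hρ : 0 < ρ) (h0 : 0 < a) (has : a ≤ s) (hst : s ≤ t) (htb : t ≤ b) :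
    ρ * (a ^ ρ / b) * (t - s) ≤ t ^ ρ - s ^ ρ ∧ t ^ ρ - s ^ ρ ≤ ρ * (b ^ ρ / a) * (t - s) := by
  rcases eq_or_lt_of_le hst with rfl | h
  · simp
  have hb : 0 < b := h0.trans_le (has.trans (hst.trans htb))
  obtain ⟨ξ, hξ, hslope⟩ := exists_hasDerivAt_eq_slope (fun y => y ^ ρ)
      (fun y => ρ * y ^ (ρ - 1)) h
      (ContinuousOn.rpow_const continuousOn_id fun y hy =>
        Or.inl (ne_of_gt (h0.trans_le (has.trans hy.1))))
      (fun y hy => Real.hasDerivAt_rpow_const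
        (Or.inl (ne_of_gt (h0.trans_le (has.trans hy.1.le)))))
  have hts : (0:ℝ) < t - s := by linarith
  have hξpos : 0 < ξ := h0.trans_le (has.trans hξ.1.le)
  rw [eq_div_iff hts.ne'] at hslope
  have hξ1 : ξ ^ (ρ - 1) = ξ ^ ρ / ξ := by
    rw [Real.rpow_sub hξpos, Real.rpow_one]
  have hc1 : a ^ ρ / b ≤ ξ ^ (ρ - 1) := by
    rw [hξ1]
    exact div_le_div₀ (Real.rpow_nonneg hξpos.le _)
      (Real.rpow_le_rpow h0.le (has.trans hξ.1.le) hρ.le) hξpos (hξ.2.le.trans htb)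
  have hc2 : ξ ^ (ρ - 1) ≤ b ^ ρ / a := by
    rw [hξ1]
    exact div_le_div₀ (by positivity)
      (Real.rpow_le_rpow hξpos.le (hξ.2.le.trans htb) hρ.le) h0 (has.trans hξ.1.le)
  constructor
  · calc ρ * (a ^ ρ / b) * (t - s) ≤ ρ * ξ ^ (ρ - 1) * (t - s) := by
          have := mul_le_mul_of_nonneg_left hc1 hρ.le
          exact mul_le_mul_of_nonneg_right this hts.le
      _ = t ^ ρ - s ^ ρ := hslope
  · calc t ^ ρ - s ^ ρ = ρ * ξ ^ (ρ - 1) * (t - s) := hslope.symm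
      _ ≤ ρ * (b ^ ρ / a) * (t - s) := by
          have := mul_le_mul_of_nonneg_left hc2 hρ.le
          exact mul_le_mul_of_nonneg_right this hts.le


lemma rpow_sub_le_c {ρ a b s t c : ℝ} (hρ : 0 < ρ) (h0 : 0 < a) (has : a ≤ s) (hst : s < t)
    (htb : t ≤ b) (hc : c ≤ 0) :
    (t ^ ρ - s ^ ρ) ^ c ≤ (ρ * (a ^ ρ / b)) ^ c * (t - s) ^ c := by
  have hb : 0 < b := h0.trans_le (has.trans (hst.le.trans htb))
  have he : (0:ℝ) < ρ * (a ^ ρ / b) * (t - s) :=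
    mul_pos (by positivity) (sub_pos.2 hst)
  calc (t ^ ρ - s ^ ρ) ^ c ≤ (ρ * (a ^ ρ / b) * (t - s)) ^ c :=
        Real.rpow_le_rpow_of_nonpos he (slope_bounds hρ h0 has hst.le htb).1 hc
    _ = (ρ * (a ^ ρ / b)) ^ c * (t - s) ^ c := Real.mul_rpow (by positivity) (by linarith)

lemma rpow_rm1_le {ρ a b t : ℝ} (hρ : 0 < ρ) (h0 : 0 < a) (hat : a ≤ t) (htb : t ≤ b) :
    t ^ (ρ - 1) ≤ b ^ ρ / a := by
  have ht : 0 < t := h0.trans_le hat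
  have hb : 0 < b := ht.trans_le htb
  rw [Real.rpow_sub ht, Real.rpow_one]
  exact div_le_div₀ (Real.rpow_nonneg (by positivity) _)
    (Real.rpow_le_rpow ht.le htb hρ.le) h0 hat

lemma inner_eval {ρ α μ s x : ℝ} (hρ : 0 < ρ) (hα : 0 < α) (hα1 : α ≤ 1) (hμ : 0 < μ)
    (hμ1 : μ ≤ 1) (hs : 0 < s) (hsx : s < x) :
    ∫ t in Ioo s x, t ^ (ρ - 1) * (x ^ ρ - t ^ ρ) ^ (α - 1) * (t ^ ρ - s ^ ρ) ^ (μ - 1) =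
      ρ⁻¹ * ((x ^ ρ - s ^ ρ) ^ (α + μ - 1) *
        (Real.Gamma α * Real.Gamma μ / Real.Gamma (α + μ))) := by
  have hx : 0 < x := hs.trans hsx
  have hSX : s ^ ρ < x ^ ρ := Real.rpow_lt_rpow hs.le hsx hρ
  set g : ℝ → ℝ := fun u => (u - s ^ ρ) ^ (μ - 1) * (x ^ ρ - u) ^ (α - 1) with hg
  have hsub : (∫ t in s..x, (ρ * t ^ (ρ - 1)) • g (t ^ ρ)) = ∫ u in s ^ ρ..x ^ ρ, g u := by
    have hminmax : min s x = s ∧ max s x = x := ⟨min_eq_left hsx.le, max_eq_right hsx.le⟩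
    have himg : (fun t : ℝ => t ^ ρ) '' Ioo s x ⊆ Ioo (s ^ ρ) (x ^ ρ) := by
      rintro _ ⟨t, ht, rfl⟩
      exact ⟨Real.rpow_lt_rpow hs.le ht.1 hρ, Real.rpow_lt_rpow (hs.trans ht.1).le ht.2 hρ⟩
    have himg2 : (fun t : ℝ => t ^ ρ) '' Icc s x ⊆ Icc (s ^ ρ) (x ^ ρ) := by
      rintro _ ⟨t, ht, rfl⟩
      exact ⟨Real.rpow_le_rpow hs.le ht.1 hρ.le, Real.rpow_le_rpow (hs.trans_le ht.1).le ht.2 hρ.le⟩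
    have hfc : ContinuousOn (fun t : ℝ => t ^ ρ) (Set.uIcc s x) := by
      rw [uIcc_of_le hsx.le]
      exact ContinuousOn.rpow_const continuousOn_id fun t ht =>
        Or.inl (ne_of_gt (hs.trans_le ht.1))
    have H := intervalIntegral.integral_comp_smul_deriv''' (E := ℝ) (a := s) (b := x)
      (f := fun t : ℝ => t ^ ρ) (f' := fun t : ℝ => ρ * t ^ (ρ - 1)) (g := g) hfc ?_ ?_ ?_ ?_
    · simpa [Function.comp] using H
    · intro t ht
      rw [hminmax.1, hminmax.2] at ht
      exact (Real.hasDerivAt_rpow_const (Or.inl (ne_of_gt (hs.trans ht.1)))).hasDerivWithinAt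
    · rw [hminmax.1, hminmax.2]
      refine ContinuousOn.mono ?_ himg
      refine ContinuousOn.mul ?_ ?_
      · exact (continuousOn_id.sub continuousOn_const).rpow_const fun u hu =>
          Or.inl (ne_of_gt (sub_pos.2 hu.1))
      · exact (continuousOn_const.sub continuousOn_id).rpow_const fun u hu =>
          Or.inl (ne_of_gt (sub_pos.2 hu.2))
    · exact IntegrableOn.mono_set
        ((integrableOn_Icc_iff_integrableOn_Ioo).mpr (beta_integrableOn hμ hα hSX))
        (by rw [uIcc_of_le hsx.le]; exact himg2)
    · rw [uIcc_of_le hsx.le, integrableOn_Icc_iff_integrableOn_Ioo]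
      have hmeas : Measurable fun t : ℝ => (ρ * t ^ (ρ - 1)) • g (t ^ ρ) := by
        refine (( (measurable_id.pow_const _).const_mul ρ).smul ?_)
        exact (((measurable_id.pow_const ρ).sub_const _).pow_const _).mul
          ((measurable_const.sub (measurable_id.pow_const ρ)).pow_const _)
      set e : ℝ := ρ * (s ^ ρ / x) with he
      have he0 : 0 < e := by positivity
      set K : ℝ := ρ * (x ^ ρ / s) * (e ^ (μ - 1) * e ^ (α - 1)) with hK
      refine Integrable.mono'
        ((beta_integrableOn hμ hα hsx).const_mul K) hmeas.aestronglyMeasurable.restrict ?_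
      rw [ae_restrict_iff' measurableSet_Ioo]
      refine Eventually.of_forall fun t ht => ?_
      obtain ⟨hst, htx⟩ := ht
      have ht0 : 0 < t := hs.trans hst
      have h1 : (t ^ ρ - s ^ ρ) ^ (μ - 1) ≤ e ^ (μ - 1) * (t - s) ^ (μ - 1) :=
        rpow_sub_le_c hρ hs le_rfl hst htx.le (by linarith)
      have h2 : (x ^ ρ - t ^ ρ) ^ (α - 1) ≤ e ^ (α - 1) * (x - t) ^ (α - 1) := by
        have := rpow_sub_le_c (s := t) (t := x) hρ hs hst.le htx le_rfl (by linarith : α - 1 ≤ 0)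
        exact this
      have h3 : t ^ (ρ - 1) ≤ x ^ ρ / s := rpow_rm1_le hρ hs hst.le htx.le
      simp only [Function.comp_apply, smul_eq_mul, Real.norm_eq_abs]
      have hg1 : (0:ℝ) ≤ (t ^ ρ - s ^ ρ) ^ (μ - 1) := Real.rpow_nonneg
        (sub_nonneg.2 (Real.rpow_le_rpow hs.le hst.le hρ.le)) _
      have hg2 : (0:ℝ) ≤ (x ^ ρ - t ^ ρ) ^ (α - 1) := Real.rpow_nonneg
        (sub_nonneg.2 (Real.rpow_le_rpow ht0.le htx.le hρ.le)) _
      rw [abs_of_nonneg (mul_nonneg (by positivity) (mul_nonneg hg1 hg2))]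
      calc ρ * t ^ (ρ - 1) * ((t ^ ρ - s ^ ρ) ^ (μ - 1) * (x ^ ρ - t ^ ρ) ^ (α - 1))
          ≤ ρ * (x ^ ρ / s) * ((e ^ (μ - 1) * (t - s) ^ (μ - 1)) * (e ^ (α - 1) * (x - t) ^ (α - 1))) := by
            have hm1 : ρ * t ^ (ρ - 1) ≤ ρ * (x ^ ρ / s) := mul_le_mul_of_nonneg_left h3 hρ.le
            have hm2 : (t ^ ρ - s ^ ρ) ^ (μ - 1) * (x ^ ρ - t ^ ρ) ^ (α - 1) ≤
                (e ^ (μ - 1) * (t - s) ^ (μ - 1)) * (e ^ (α - 1) * (x - t) ^ (α - 1)) :=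
              mul_le_mul h1 h2 hg2 (mul_nonneg (Real.rpow_nonneg he0.le _) (Real.rpow_nonneg (by linarith) _))
            exact mul_le_mul hm1 hm2 (mul_nonneg hg1 hg2) (by positivity)
        _ = K * ((t - s) ^ (μ - 1) * (x - t) ^ (α - 1)) := by rw [hK]; ring
  -- now convert
  have hpull : (∫ t in s..x, (ρ * t ^ (ρ - 1)) • g (t ^ ρ)) =
      ρ * ∫ t in s..x, t ^ (ρ - 1) * (x ^ ρ - t ^ ρ) ^ (α - 1) * (t ^ ρ - s ^ ρ) ^ (μ - 1) := by
    rw [← intervalIntegral.integral_const_mul]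
    refine intervalIntegral.integral_congr fun t ht => ?_
    simp only [smul_eq_mul, hg]
    ring
  have hrhs : (∫ u in s ^ ρ..x ^ ρ, g u) =
      (x ^ ρ - s ^ ρ) ^ (μ + α - 1) * (Real.Gamma μ * Real.Gamma α / Real.Gamma (μ + α)) :=
    rbeta_eval hμ hα hSX
  rw [hpull, hrhs] at hsub
  rw [← MeasureTheory.integral_Ioc_eq_integral_Ioo, ← intervalIntegral.integral_of_le hsx.le]
  rw [show α + μ - 1 = μ + α - 1 by ring, show α + μ = μ + α by ring,
    show Real.Gamma α * Real.Gamma μ = Real.Gamma μ * Real.Gamma α by ring]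
  rw [← hsub]
  field_simp


lemma semigroup {ρ a b α μ γ : ℝ} (hρ : 0 < ρ) (ha : 0 < a) (hab : a < b)
    (hα0 : 0 < α) (hα1 : α ≤ 1) (hμ0 : 0 < μ) (hμ1 : μ ≤ 1) (hγ : γ = α + μ) (hγ1 : γ ≤ 1)
    (ψ H : ℝ → ℝ) (hψm : Measurable ψ) (hHc : ContinuousOn H (Icc a b))
    (hH : ∀ s ∈ Ioc a b, ψ s = ((s ^ ρ - a ^ ρ) / ρ) ^ (γ - 1) * H s) :
    ∀ x ∈ Ioc a b, igral ρ γ a ψ x = igral ρ α a (igral ρ μ a ψ) x := by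
  have hγ0 : 0 < γ := by rw [hγ]; linarith
  have hb : 0 < b := ha.trans hab
  obtain ⟨M, hM⟩ := isCompact_Icc.exists_bound_of_continuousOn hHc
  have hM0 : 0 ≤ M := (norm_nonneg _).trans (hM a ⟨le_rfl, hab.le⟩)
  set ε : ℝ := a ^ ρ / b with hεd
  have hε : 0 < ε := by positivity
  -- bound for ψ
  set c₁ : ℝ := M * ε ^ (γ - 1) with hc₁d
  have hψb : ∀ s ∈ Ioc a b, |ψ s| ≤ c₁ * (s - a) ^ (γ - 1) := by
    intro s hs
    have hsa : 0 < s - a := sub_pos.2 hs.1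
    have hw : ε * (s - a) ≤ (s ^ ρ - a ^ ρ) / ρ := by
      have := (slope_bounds hρ ha le_rfl hs.1.le hs.2).1
      rw [le_div_iff₀ hρ]
      nlinarith
    have hw0 : (0:ℝ) < ε * (s - a) := by positivity
    have h1 : ((s ^ ρ - a ^ ρ) / ρ) ^ (γ - 1) ≤ ε ^ (γ - 1) * (s - a) ^ (γ - 1) := by
      calc ((s ^ ρ - a ^ ρ) / ρ) ^ (γ - 1) ≤ (ε * (s - a)) ^ (γ - 1) :=
            Real.rpow_le_rpow_of_nonpos hw0 hw (by linarith)
        _ = ε ^ (γ - 1) * (s - a) ^ (γ - 1) := Real.mul_rpow hε.le hsa.le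
    rw [hH s hs, abs_mul, abs_of_nonneg (Real.rpow_nonneg (le_trans hw0.le hw) _)]
    calc ((s ^ ρ - a ^ ρ) / ρ) ^ (γ - 1) * |H s| ≤ (ε ^ (γ - 1) * (s - a) ^ (γ - 1)) * M := by
          refine mul_le_mul h1 (hM s ⟨hs.1.le, hs.2⟩) (abs_nonneg _) (mul_nonneg (Real.rpow_nonneg hε.le _) (Real.rpow_nonneg hsa.le _))
      _ = c₁ * (s - a) ^ (γ - 1) := by rw [hc₁d]; ring
  intro x hx
  obtain ⟨hax, hxb⟩ := hx
  have hx0 : 0 < x := ha.trans hax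
  set k : ℝ → ℝ := fun t => t ^ (ρ - 1) * (x ^ ρ - t ^ ρ) ^ (α - 1) with hkd
  set f0 : ℝ → ℝ → ℝ := fun t s => s ^ (ρ - 1) * ψ s * (t ^ ρ - s ^ ρ) ^ (μ - 1) with hf0d
  set Q : ℝ × ℝ → ℝ := fun p => if p.2 < p.1 then k p.1 * f0 p.1 p.2 else 0 with hQd
  set μv : Measure ℝ := volume.restrict (Ioo a x) with hμvd
  set c₂ : ℝ := (b ^ ρ / a) * (ρ * ε) ^ (α - 1) with hc₂d
  have hc₂0 : 0 ≤ c₂ := by positivity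
  have hk_nonneg : ∀ t ∈ Ioo a x, 0 ≤ k t := by
    intro t ht
    have ht0 : 0 < t := ha.trans ht.1
    have : t ^ ρ ≤ x ^ ρ := Real.rpow_le_rpow ht0.le ht.2.le hρ.le
    simp only [hkd]
    have := sub_nonneg.2 this
    positivity
  have hk_bound : ∀ t ∈ Ioo a x, k t ≤ c₂ * (x - t) ^ (α - 1) := by
    intro t ht
    have ht0 : 0 < t := ha.trans ht.1
    have h1 : t ^ (ρ - 1) ≤ b ^ ρ / a := rpow_rm1_le hρ ha ht.1.le (ht.2.le.trans hxb)
    have h2 : (x ^ ρ - t ^ ρ) ^ (α - 1) ≤ (ρ * ε) ^ (α - 1) * (x - t) ^ (α - 1) :=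
      rpow_sub_le_c hρ ha ht.1.le ht.2 hxb (by linarith)
    have h2' : (0:ℝ) ≤ (x ^ ρ - t ^ ρ) ^ (α - 1) :=
      Real.rpow_nonneg (sub_nonneg.2 (Real.rpow_le_rpow ht0.le ht.2.le hρ.le)) _
    calc k t ≤ (b ^ ρ / a) * ((ρ * ε) ^ (α - 1) * (x - t) ^ (α - 1)) :=
          mul_le_mul h1 h2 h2' (by positivity)
      _ = c₂ * (x - t) ^ (α - 1) := by rw [hc₂d]; ring
  set c₃ : ℝ := (b ^ ρ / a) * c₁ * (ρ * ε) ^ (μ - 1) with hc₃d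
  have hf0_bound : ∀ t ∈ Ioc a b, ∀ s ∈ Ioo a t,
      |f0 t s| ≤ c₃ * ((s - a) ^ (γ - 1) * (t - s) ^ (μ - 1)) := by
    intro t ht s hs
    have hs0 : 0 < s := ha.trans hs.1
    have hsb : s ≤ b := (hs.2.le.trans ht.2)
    have h1 : s ^ (ρ - 1) ≤ b ^ ρ / a := rpow_rm1_le hρ ha hs.1.le hsb
    have h2 : |ψ s| ≤ c₁ * (s - a) ^ (γ - 1) := hψb s ⟨hs.1, hsb⟩
    have h3 : (t ^ ρ - s ^ ρ) ^ (μ - 1) ≤ (ρ * ε) ^ (μ - 1) * (t - s) ^ (μ - 1) :=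
      rpow_sub_le_c hρ ha hs.1.le hs.2 ht.2 (by linarith)
    have h3' : (0:ℝ) ≤ (t ^ ρ - s ^ ρ) ^ (μ - 1) :=
      Real.rpow_nonneg (sub_nonneg.2 (Real.rpow_le_rpow hs0.le hs.2.le hρ.le)) _
    simp only [hf0d]
    rw [abs_mul, abs_mul, abs_of_nonneg (Real.rpow_nonneg hs0.le _), abs_of_nonneg h3']
    calc s ^ (ρ - 1) * |ψ s| * (t ^ ρ - s ^ ρ) ^ (μ - 1)
        ≤ (b ^ ρ / a) * (c₁ * (s - a) ^ (γ - 1)) * ((ρ * ε) ^ (μ - 1) * (t - s) ^ (μ - 1)) := by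
          have hc₁0 : 0 ≤ c₁ := by rw [hc₁d]; positivity
          refine mul_le_mul (mul_le_mul h1 h2 (abs_nonneg _) (by positivity)) h3 h3' ?_
          exact mul_nonneg (by positivity) (mul_nonneg hc₁0 (Real.rpow_nonneg (by linarith [hs.1]) _))
      _ = c₃ * ((s - a) ^ (γ - 1) * (t - s) ^ (μ - 1)) := by rw [hc₃d]; ring
  have hf0_meas : ∀ t : ℝ, Measurable fun s => f0 t s := by
    intro t
    simp only [hf0d]
    exact ((measurable_id.pow_const _).mul hψm).mul
      ((measurable_const.sub (measurable_id.pow_const _)).pow_const _)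
  have hf0_int : ∀ t ∈ Ioc a b, IntegrableOn (fun s => f0 t s) (Ioo a t) := by
    intro t ht
    refine Integrable.mono' ((beta_integrableOn hγ0 hμ0 ht.1).const_mul c₃)
      (hf0_meas t).aestronglyMeasurable.restrict ?_
    rw [ae_restrict_iff' measurableSet_Ioo]
    exact Eventually.of_forall fun s hs => hf0_bound t ht s hs
  have hQm : Measurable Q := by
    simp only [hQd, hkd, hf0d]
    refine Measurable.ite (measurableSet_lt measurable_snd measurable_fst) ?_ measurable_const
    exact ((measurable_fst.pow_const _).mul
        ((measurable_const.sub (measurable_fst.pow_const _)).pow_const _)).mul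
      (((measurable_snd.pow_const _).mul (hψm.comp measurable_snd)).mul
        (((measurable_fst.pow_const _).sub (measurable_snd.pow_const _)).pow_const _))
  have hQfirst : ∀ t : ℝ, (fun s => Q (t, s)) = (Iio t).indicator (fun s => k t * f0 t s) := by
    intro t
    funext s
    simp only [hQd, indicator_apply, mem_Iio]
  have hIioInter : ∀ t ∈ Ioo a x, Iio t ∩ Ioo a x = Ioo a t := by
    intro t ht
    ext u
    simp only [mem_inter_iff, mem_Iio, mem_Ioo]
    constructor
    · rintro ⟨h1, h2, h3⟩; exact ⟨h2, h1⟩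
    · rintro ⟨h1, h2⟩; exact ⟨h2, h1, h2.trans ht.2⟩
  have hQint_s : ∀ t ∈ Ioo a x, Integrable (fun s => Q (t, s)) μv := by
    intro t ht
    rw [hQfirst t, integrable_indicator_iff measurableSet_Iio]
    have : μv.restrict (Iio t) = volume.restrict (Ioo a t) := by
      rw [hμvd, Measure.restrict_restrict measurableSet_Iio, hIioInter t ht]
    rw [IntegrableOn, this]
    exact ((hf0_int t ⟨ht.1, ht.2.le.trans hxb⟩)).const_mul (k t)
  -- the norm-integral bound
  set BB : ℝ := Real.Gamma γ * Real.Gamma μ / Real.Gamma (γ + μ) with hBBd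
  have hBB0 : 0 ≤ BB := by
    have := Real.Gamma_pos_of_pos hγ0
    have := Real.Gamma_pos_of_pos hμ0
    have := Real.Gamma_pos_of_pos (by linarith : (0:ℝ) < γ + μ)
    positivity
  set c₄ : ℝ := c₂ * c₃ * BB with hc₄d
  have hnorm_eval : ∀ t ∈ Ioo a x, (∫ s, ‖Q (t, s)‖ ∂μv) ≤
      c₄ * ((t - a) ^ (γ + μ - 1) * (x - t) ^ (α - 1)) := by
    intro t ht
    have htIoc : t ∈ Ioc a b := ⟨ht.1, ht.2.le.trans hxb⟩
    have hrr : μv.restrict (Iio t) = volume.restrict (Ioo a t) := by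
      rw [hμvd, Measure.restrict_restrict measurableSet_Iio, hIioInter t ht]
    have e1 : (∫ s, ‖Q (t, s)‖ ∂μv) = ∫ s in Ioo a t, ‖k t * f0 t s‖ := by
      rw [show (fun s => ‖Q (t, s)‖) = fun s => (Iio t).indicator (fun s => ‖k t * f0 t s‖) s by
          funext s
          rw [show Q (t, s) = (Iio t).indicator (fun s => k t * f0 t s) s from
            congrFun (hQfirst t) s, norm_indicator_eq_indicator_norm],
        integral_indicator measurableSet_Iio, hrr]
    have hkb : |k t| ≤ c₂ * (x - t) ^ (α - 1) := by
      rw [abs_of_nonneg (hk_nonneg t ht)]; exact hk_bound t ht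
    have e2 : (∫ s in Ioo a t, ‖k t * f0 t s‖) ≤
        ∫ s in Ioo a t, (c₂ * (x - t) ^ (α - 1) * c₃) * ((s - a) ^ (γ - 1) * (t - s) ^ (μ - 1)) := by
      refine integral_mono_of_nonneg (Eventually.of_forall fun s => norm_nonneg _)
        (((beta_integrableOn hγ0 hμ0 ht.1).const_mul _)) ?_
      refine (ae_restrict_iff' measurableSet_Ioo).mpr ?_
      refine Eventually.of_forall fun s hs => ?_
      simp only [norm_mul, Real.norm_eq_abs]
      calc |k t| * |f0 t s| ≤ (c₂ * (x - t) ^ (α - 1)) * (c₃ * ((s - a) ^ (γ - 1) * (t - s) ^ (μ - 1))) := by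
            refine mul_le_mul hkb (hf0_bound t htIoc s hs) (abs_nonneg _) ?_
            have : (0:ℝ) ≤ (x - t) ^ (α - 1) := Real.rpow_nonneg (by linarith [ht.2]) _
            positivity
        _ = (c₂ * (x - t) ^ (α - 1) * c₃) * ((s - a) ^ (γ - 1) * (t - s) ^ (μ - 1)) := by ring
    have e3 : (∫ s in Ioo a t, (c₂ * (x - t) ^ (α - 1) * c₃) * ((s - a) ^ (γ - 1) * (t - s) ^ (μ - 1)))
        = (c₂ * (x - t) ^ (α - 1) * c₃) * ((t - a) ^ (γ + μ - 1) * BB) := by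
      rw [integral_const_mul, rbeta_eval_Ioo hγ0 hμ0 ht.1, hBBd]
    have e4 : (c₂ * (x - t) ^ (α - 1) * c₃) * ((t - a) ^ (γ + μ - 1) * BB)
        = c₄ * ((t - a) ^ (γ + μ - 1) * (x - t) ^ (α - 1)) := by rw [hc₄d]; ring
    rw [e1]
    calc (∫ s in Ioo a t, ‖k t * f0 t s‖) ≤ _ := e2
      _ = _ := by rw [e3, e4]
  have hnorm_int : Integrable (fun t => ∫ s, ‖Q (t, s)‖ ∂μv) μv := by
    refine Integrable.mono'
      ((beta_integrableOn (by linarith : (0:ℝ) < γ + μ) hα0 hax).const_mul c₄)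
      (hQm.norm.aestronglyMeasurable.integral_prod_right') ?_
    rw [ae_restrict_iff' measurableSet_Ioo]
    refine Eventually.of_forall fun t ht => ?_
    rw [Real.norm_eq_abs, abs_of_nonneg (integral_nonneg fun s => norm_nonneg _)]
    exact hnorm_eval t ht
  have hQint : Integrable (fun p : ℝ × ℝ => Q p) (μv.prod μv) := by
    rw [integrable_prod_iff hQm.aestronglyMeasurable]
    constructor
    · exact (ae_restrict_mem measurableSet_Ioo).mono fun t ht => hQint_s t ht
    · exact hnorm_int
  have hswap : (∫ t, ∫ s, Q (t, s) ∂μv ∂μv) = ∫ s, ∫ t, Q (t, s) ∂μv ∂μv :=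
    integral_integral_swap (f := fun t s => Q (t, s)) hQint
  -- evaluate each side
  set J : ℝ := ∫ s in Ioo a x, s ^ (ρ - 1) * ψ s * (x ^ ρ - s ^ ρ) ^ (γ - 1) with hJd
  have hR1 : igral ρ α a (igral ρ μ a ψ) x =
      ρ ^ (1 - α) / Real.Gamma α * (ρ ^ (1 - μ) / Real.Gamma μ * ∫ t, ∫ s, Q (t, s) ∂μv ∂μv) := by
    rw [igral, if_neg hα0.ne', intervalIntegral.integral_of_le hax.le,
      integral_Ioc_eq_integral_Ioo]
    congr 1
    rw [← integral_const_mul]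
    refine setIntegral_congr_fun measurableSet_Ioo fun t ht => ?_
    have hat : a < t := ht.1
    have e1 : igral ρ μ a ψ t =
        ρ ^ (1 - μ) / Real.Gamma μ * ∫ s in Ioo a t, f0 t s := by
      rw [igral, if_neg hμ0.ne', intervalIntegral.integral_of_le hat.le,
        integral_Ioc_eq_integral_Ioo]
      try simp only [hf0d]
    have e2 : (∫ s, Q (t, s) ∂μv) = k t * ∫ s in Ioo a t, f0 t s := by
      rw [hQfirst t, integral_indicator measurableSet_Iio,
        Measure.restrict_restrict measurableSet_Iio, hIioInter t ht, integral_const_mul]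
    rw [e1, e2]
    simp only [hkd]
    try ring
  have hR2 : (∫ s, ∫ t, Q (t, s) ∂μv ∂μv) =
      (ρ⁻¹ * (Real.Gamma α * Real.Gamma μ / Real.Gamma γ)) * J := by
    rw [hJd, ← integral_const_mul]
    refine setIntegral_congr_fun measurableSet_Ioo fun s hs => ?_
    have hs0 : 0 < s := ha.trans hs.1
    have hQsecond : (fun t => Q (t, s)) = (Ioi s).indicator (fun t => k t * f0 t s) := by
      funext t
      simp only [hQd, indicator_apply, mem_Ioi]
    have hIoiInter : Ioi s ∩ Ioo a x = Ioo s x := by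
      ext u
      simp only [mem_inter_iff, mem_Ioi, mem_Ioo]
      constructor
      · rintro ⟨h1, h2, h3⟩; exact ⟨h1, h3⟩
      · rintro ⟨h1, h2⟩; exact ⟨h1, hs.1.trans h1, h2⟩
    have e1 : (∫ t, Q (t, s) ∂μv) = ∫ t in Ioo s x, k t * f0 t s := by
      rw [hQsecond, integral_indicator measurableSet_Ioi,
        Measure.restrict_restrict measurableSet_Ioi, hIoiInter]
    have e2 : (∫ t in Ioo s x, k t * f0 t s) =
        ∫ t in Ioo s x, (s ^ (ρ - 1) * ψ s) *
          (t ^ (ρ - 1) * (x ^ ρ - t ^ ρ) ^ (α - 1) * (t ^ ρ - s ^ ρ) ^ (μ - 1)) := by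
      refine setIntegral_congr_fun measurableSet_Ioo fun t ht => ?_
      simp only [hkd, hf0d]
      ring
    rw [e1, e2, integral_const_mul, inner_eval hρ hα0 hα1 hμ0 hμ1 hs0 hs.2, ← hγ]
    ring
  have hL : igral ρ γ a ψ x = ρ ^ (1 - γ) / Real.Gamma γ * J := by
    rw [igral, if_neg hγ0.ne', intervalIntegral.integral_of_le hax.le,
      integral_Ioc_eq_integral_Ioo, hJd]
  have harith : ρ ^ (1 - α) / Real.Gamma α * (ρ ^ (1 - μ) / Real.Gamma μ *
      (ρ⁻¹ * (Real.Gamma α * Real.Gamma μ / Real.Gamma γ))) = ρ ^ (1 - γ) / Real.Gamma γ := by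
    have hΓα := Real.Gamma_pos_of_pos hα0
    have hΓμ := Real.Gamma_pos_of_pos hμ0
    have hΓγ := Real.Gamma_pos_of_pos hγ0
    rw [show (1 - γ) = (1 - α) + ((1 - μ) + (-1)) by rw [hγ]; ring, Real.rpow_add hρ,
      Real.rpow_add hρ, Real.rpow_neg_one]
    field_simp
  rw [hL, hR1, hswap, hR2, ← harith]
  ring


/-- `ρJ^γ ρD^γ φ = ρJ^α ρD^{α,β} φ`. -/
theorem igral_genD_eq_igral_hkD (ρ a b α β γ : ℝ) (φ : ℝ → ℝ) (hα0 : 0 < α)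
    (hα1 : α < 1) (hβ0 : 0 ≤ β) (hβ1 : β ≤ 1) (hγ : γ = α + β * (1 - α))
    (hρ : 0 < ρ) (ha : 0 < a) (hab : a < b)
    (hφ : MemW ρ (1 - γ) a b φ) (hDφ : MemW ρ (1 - γ) a b (genD ρ γ a φ)) :
    ∀ x ∈ Ioc a b, igral ρ γ a (genD ρ γ a φ) x = igral ρ α a (hkD ρ α β a φ) x := by
  have h1γ : (1 - β) * (1 - α) = 1 - γ := by rw [hγ]; ring
  have hkDeq : hkD ρ α β a φ = igral ρ (β * (1 - α)) a (genD ρ γ a φ) := by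
    unfold hkD
    congr 1
    funext s
    rw [h1γ]
    rfl
  rcases eq_or_lt_of_le hβ0 with hβ | hβ
  · have hγα : γ = α := by rw [hγ, ← hβ]; ring
    have hid : igral ρ (β * (1 - α)) a (genD ρ γ a φ) = genD ρ γ a φ := by
      funext s
      rw [igral, if_pos (by rw [← hβ]; ring)]
    intro x hx
    rw [hkDeq, hid, hγα]
  · have hμ0 : 0 < β * (1 - α) := mul_pos hβ (by linarith)
    have hμ1 : β * (1 - α) ≤ 1 := by nlinarith
    have hγ1 : γ ≤ 1 := by rw [hγ]; nlinarith
    obtain ⟨H, hHc, hh⟩ := hDφ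
    have hψm : Measurable (genD ρ γ a φ) := by
      unfold genD
      exact (measurable_id.pow_const _).mul (measurable_deriv _)
    have hH : ∀ s ∈ Ioc a b, genD ρ γ a φ s = ((s ^ ρ - a ^ ρ) / ρ) ^ (γ - 1) * H s := by
      intro s hs
      have hw : 0 < (s ^ ρ - a ^ ρ) / ρ :=
        div_pos (sub_pos.2 (Real.rpow_lt_rpow ha.le hs.1 hρ)) hρ
      rw [hh s hs, ← mul_assoc, ← Real.rpow_add hw,
        show γ - 1 + (1 - γ) = 0 by ring, Real.rpow_zero, one_mul]
    intro x hx
    rw [hkDeq]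
    exact semigroup hρ ha hab hα0 hα1.le hμ0 hμ1 hγ hγ1 _ H hψm hHc hH x hx
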